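/- Let m_P, m_Q ∈ ℝ with m_P ≠ m_Q and σ_P, σ_Q ≥ 0. Set a := m_P − m_Q, b := σ_Q² − σ_P², v := (1/(2|a|))√(b² + 2a²(σ_P² + σ_Q²) + a⁴). Then 4a²v² = (a² + (σ_P + σ_Q)²)·(a² + (σ_P − σ_Q)²), and the quantities r := 1/2 + (b + a²)/(4av) and s := 1/2 + (b − a²)/(4av) both lie in the interval [0,1], with √(r(1−r)) = σ_P/(2v) and √(s(1−s)) = σ_Q/(2v). -/

import Mathlib

open Real

private lemma icc_of_mul_nonneg {r : ℝ} (h : 0 ≤ r * (1 - r)) :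
    r ∈ Set.Icc (0 : ℝ) 1 := by
  constructor <;> nlinarith

theorem binary_params_identities
    (mP mQ σP σQ : ℝ) (hne : mP ≠ mQ) (hσP : 0 ≤ σP) (hσQ : 0 ≤ σQ)
    (a b v r s : ℝ)
    (ha : a = mP - mQ) (hb : b = σQ ^ 2 - σP ^ 2)
    (hv : v = (1 / (2 * |a|)) *
      Real.sqrt (b ^ 2 + 2 * a ^ 2 * (σP ^ 2 + σQ ^ 2) + a ^ 4))
    (hr : r = 1 / 2 + (b + a ^ 2) / (4 * a * v))
    (hs : s = 1 / 2 + (b - a ^ 2) / (4 * a * v)) :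
    4 * a ^ 2 * v ^ 2 = (a ^ 2 + (σP + σQ) ^ 2) * (a ^ 2 + (σP - σQ) ^ 2) ∧
    r ∈ Set.Icc (0 : ℝ) 1 ∧ s ∈ Set.Icc (0 : ℝ) 1 ∧
    Real.sqrt (r * (1 - r)) = σP / (2 * v) ∧
    Real.sqrt (s * (1 - s)) = σQ / (2 * v) := by
  have ha0 : a ≠ 0 := by rw [ha]; exact sub_ne_zero.mpr hne
  set D : ℝ := b ^ 2 + 2 * a ^ 2 * (σP ^ 2 + σQ ^ 2) + a ^ 4 with hD
  have hDfac : D = (a ^ 2 + (σP + σQ) ^ 2) * (a ^ 2 + (σP - σQ) ^ 2) := by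
    rw [hD, hb]; ring
  have hDpos : 0 < D := by
    have h1 : 0 < a ^ 2 := by positivity
    rw [hDfac]
    nlinarith [sq_nonneg (σP + σQ), sq_nonneg (σP - σQ)]
  have habs : 0 < |a| := abs_pos.mpr ha0
  have hvpos : 0 < v := by
    rw [hv]
    exact mul_pos (by positivity) (Real.sqrt_pos.mpr hDpos)
  have hv2' : v ^ 2 = D * (4 * a ^ 2)⁻¹ := by
    rw [hv, mul_pow, Real.sq_sqrt hDpos.le, div_pow, mul_pow, sq_abs]
    ring
  have hv2 : 4 * a ^ 2 * v ^ 2 = D := by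
    rw [hv2']; field_simp
  have hv0 : v ≠ 0 := hvpos.ne'
  have hrr : r * (1 - r) = (σP / (2 * v)) ^ 2 := by
    rw [hr]
    field_simp
    linear_combination 4 * hv2 - (8 * a ^ 2) * hb
  have hss : s * (1 - s) = (σQ / (2 * v)) ^ 2 := by
    rw [hs]
    field_simp
    linear_combination 4 * hv2 + (8 * a ^ 2) * hb
  have hrr0 : 0 ≤ r * (1 - r) := by rw [hrr]; positivity
  have hss0 : 0 ≤ s * (1 - s) := by rw [hss]; positivity
  refine ⟨hv2.trans hDfac, icc_of_mul_nonneg hrr0, icc_of_mul_nonneg hss0, ?_, ?_⟩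
  · rw [hrr, Real.sqrt_sq (by positivity)]
  · rw [hss, Real.sqrt_sq (by positivity)]
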